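/- Let A, G be n×n real matrices with range(A) ∩ ker(A) = {0} and range(G) = range(A). Let b ∈ range(A) and x₀ ∈ range(A), and define the iterative refinement xⱼ = (I − G A) x_{j−1} + G b. Then there exists an LS solution x* ∈ range(A) with A x* = b, each xⱼ ∈ range(A), and ‖xⱼ − x*‖ ≤ ‖Qᵀ (I − G A)ʲ Q‖ · ‖x₀ − x*‖, where the columns of Q form an orthonormal basis of range(A). In particular, xⱼ → x* for all such b and x₀ if and only if Qᵀ(I − G A)ʲ Q → 0 as j → ∞. -/

import Mathlib

open scoped Matrix

open scoped Matrix.Norms.L2Operator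

/-- The Euclidean (2-) norm of a vector in ℝⁿ. -/
noncomputable def enorm' {n : ℕ} (v : Fin n → ℝ) : ℝ := Real.sqrt (∑ i, v i ^ 2)

lemma enorm_eq' {n : ℕ} (v : Fin n → ℝ) :
    enorm' v = ‖(WithLp.equiv 2 (Fin n → ℝ)).symm v‖ := by
  rw [EuclideanSpace.norm_eq]
  unfold enorm'
  congr 1
  refine Finset.sum_congr rfl fun i _ => ?_
  rw [Real.norm_eq_abs, sq_abs]
  rfl

lemma enorm_mulVec_le' {m n : ℕ} (M : Matrix (Fin m) (Fin n) ℝ) (v : Fin n → ℝ) :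
    enorm' (M *ᵥ v) ≤ ‖M‖ * enorm' v := by
  rw [enorm_eq', enorm_eq']
  exact M.l2_opNorm_mulVec ((WithLp.equiv 2 (Fin n → ℝ)).symm v)

lemma enorm_ortho' {n r : ℕ} (Q : Matrix (Fin n) (Fin r) ℝ) (h : Qᵀ * Q = 1) (w : Fin r → ℝ) :
    enorm' (Q *ᵥ w) = enorm' w := by
  unfold enorm'
  congr 1
  have h1 : ∑ i, (Q *ᵥ w) i ^ 2 = (Q *ᵥ w) ⬝ᵥ (Q *ᵥ w) := by
    simp [dotProduct, sq]
  have h2 : ∑ i, w i ^ 2 = w ⬝ᵥ w := by simp [dotProduct, sq]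
  rw [h1, h2, Matrix.dotProduct_mulVec, ← Matrix.mulVec_transpose,
    Matrix.mulVec_mulVec, h, Matrix.one_mulVec]

lemma abs_le_enorm' {n : ℕ} (v : Fin n → ℝ) (i : Fin n) : |v i| ≤ enorm' v := by
  rw [← Real.sqrt_sq_eq_abs]
  exact Real.sqrt_le_sqrt (Finset.single_le_sum (fun j _ => sq_nonneg (v j)) (Finset.mem_univ i))

lemma enorm_mulVec_le_frob' {m n : ℕ} (M : Matrix (Fin m) (Fin n) ℝ) (u : Fin n → ℝ) :
    enorm' (M *ᵥ u) ≤ Real.sqrt (∑ i, ∑ k, M i k ^ 2) * enorm' u := by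
  unfold enorm'
  rw [← Real.sqrt_mul (by positivity)]
  apply Real.sqrt_le_sqrt
  rw [Finset.sum_mul]
  refine Finset.sum_le_sum fun i _ => ?_
  have : (M *ᵥ u) i = ∑ k, M i k * u k := rfl
  rw [this]
  exact Finset.sum_mul_sq_le_sq_mul_sq _ _ _

lemma opNorm_le_frob' {m n : ℕ} (M : Matrix (Fin m) (Fin n) ℝ) :
    ‖M‖ ≤ Real.sqrt (∑ i, ∑ k, M i k ^ 2) := by
  rw [Matrix.l2_opNorm_def]
  refine ContinuousLinearMap.opNorm_le_bound _ (Real.sqrt_nonneg _) fun x => ?_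
  have h1 : ((Matrix.toEuclideanLin.trans LinearMap.toContinuousLinearMap) M) x
      = (WithLp.equiv 2 (Fin m → ℝ)).symm (M *ᵥ (WithLp.equiv 2 (Fin n → ℝ)) x) := rfl
  rw [h1, ← enorm_eq']
  calc enorm' (M *ᵥ (WithLp.equiv 2 (Fin n → ℝ)) x)
      ≤ Real.sqrt (∑ i, ∑ k, M i k ^ 2) * enorm' ((WithLp.equiv 2 (Fin n → ℝ)) x) :=
        enorm_mulVec_le_frob' M _
    _ = _ := by rw [enorm_eq']; rfl

lemma exists_sol' {n : ℕ} (A : Matrix (Fin n) (Fin n) ℝ)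
    (hinter : LinearMap.range A.mulVecLin ⊓ LinearMap.ker A.mulVecLin = ⊥)
    {b : Fin n → ℝ} (hb : b ∈ LinearMap.range A.mulVecLin) :
    ∃ xs ∈ LinearMap.range A.mulVecLin, A.mulVec xs = b := by
  set V := LinearMap.range A.mulVecLin with hV
  have hmap : ∀ x ∈ V, A.mulVecLin x ∈ V := fun x _ => LinearMap.mem_range_self _ x
  let e : V →ₗ[ℝ] V := A.mulVecLin.restrict hmap
  have hinj : Function.Injective e := by
    intro ⟨u, hu⟩ ⟨v, hv⟩ h
    have h' : A.mulVecLin u = A.mulVecLin v := congrArg Subtype.val h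
    have hker : u - v ∈ LinearMap.ker A.mulVecLin := by
      rw [LinearMap.mem_ker, map_sub, h', sub_self]
    have hsub : u - v ∈ V ⊓ LinearMap.ker A.mulVecLin :=
      Submodule.mem_inf.mpr ⟨sub_mem hu hv, hker⟩
    rw [hinter] at hsub
    exact Subtype.ext (by simpa [sub_eq_zero] using (Submodule.mem_bot ℝ).mp hsub)
  have hsurj : Function.Surjective e := (LinearMap.injective_iff_surjective).mp hinj
  obtain ⟨⟨y, hy⟩, hey⟩ := hsurj ⟨b, hb⟩
  exact ⟨y, hy, congrArg Subtype.val hey⟩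

lemma key' {n r : ℕ} (A G : Matrix (Fin n) (Fin n) ℝ) (Q : Matrix (Fin n) (Fin r) ℝ)
    (hinter : LinearMap.range A.mulVecLin ⊓ LinearMap.ker A.mulVecLin = ⊥)
    (hrange : LinearMap.range G.mulVecLin = LinearMap.range A.mulVecLin)
    (hQortho : Qᵀ * Q = 1)
    (hQrange : LinearMap.range Q.mulVecLin = LinearMap.range A.mulVecLin)
    (b : Fin n → ℝ) (hb : b ∈ LinearMap.range A.mulVecLin)
    (x₀ : Fin n → ℝ) (hx₀ : x₀ ∈ LinearMap.range A.mulVecLin)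
    (x : ℕ → Fin n → ℝ) (h0 : x 0 = x₀)
    (hrec : ∀ j : ℕ, x (j + 1) = (1 - G * A).mulVec (x j) + G.mulVec b) :
    ∃ xs ∈ LinearMap.range A.mulVecLin, A.mulVec xs = b ∧
      (∀ j : ℕ, x j ∈ LinearMap.range A.mulVecLin) ∧
      ∀ j : ℕ, enorm' (x j - xs) ≤ ‖Qᵀ * (1 - G * A) ^ j * Q‖ * enorm' (x₀ - xs) := by
  obtain ⟨xs, hxsV, hAxs⟩ := exists_sol' A hinter hb
  have hG : ∀ v : Fin n → ℝ, G *ᵥ v ∈ LinearMap.range A.mulVecLin := fun v =>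
    hrange ▸ LinearMap.mem_range_self _ v
  have hmem : ∀ j, x j ∈ LinearMap.range A.mulVecLin := by
    intro j
    induction j with
    | zero => rw [h0]; exact hx₀
    | succ j ih =>
      rw [hrec j, Matrix.sub_mulVec, Matrix.one_mulVec, ← Matrix.mulVec_mulVec]
      exact add_mem (sub_mem ih (hG _)) (hG b)
  have herr : ∀ j, x j - xs = ((1 - G * A) ^ j) *ᵥ (x₀ - xs) := by
    intro j
    induction j with
    | zero => rw [h0, pow_zero, Matrix.one_mulVec]
    | succ j ih =>
      have hfix : (1 - G * A) *ᵥ xs + G *ᵥ b = xs := by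
        rw [Matrix.sub_mulVec, Matrix.one_mulVec, ← Matrix.mulVec_mulVec, hAxs]
        abel
      calc x (j + 1) - xs = (1 - G * A) *ᵥ (x j) + G *ᵥ b - ((1 - G * A) *ᵥ xs + G *ᵥ b) := by
            rw [hrec j, hfix]
        _ = (1 - G * A) *ᵥ (x j - xs) := by rw [Matrix.mulVec_sub]; abel
        _ = ((1 - G * A) ^ (j + 1)) *ᵥ (x₀ - xs) := by
            rw [ih, Matrix.mulVec_mulVec, ← pow_succ']
  refine ⟨xs, hxsV, hAxs, hmem, fun j => ?_⟩
  have hd0 : x₀ - xs ∈ LinearMap.range Q.mulVecLin := by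
    rw [hQrange]; exact sub_mem hx₀ hxsV
  have hdj : x j - xs ∈ LinearMap.range Q.mulVecLin := by
    rw [hQrange]; exact sub_mem (hmem j) hxsV
  obtain ⟨w₀, hw₀⟩ := hd0
  obtain ⟨wj, hwj⟩ := hdj
  rw [Matrix.mulVecLin_apply] at hw₀ hwj
  have h1 : enorm' (x j - xs) = enorm' (Qᵀ *ᵥ (x j - xs)) := by
    rw [← hwj, Matrix.mulVec_mulVec, hQortho, Matrix.one_mulVec, enorm_ortho' Q hQortho]
  have h2 : Qᵀ *ᵥ (x j - xs) = (Qᵀ * (1 - G * A) ^ j * Q) *ᵥ w₀ := by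
    rw [herr j, ← hw₀, Matrix.mulVec_mulVec, Matrix.mulVec_mulVec, Matrix.mul_assoc]
  calc enorm' (x j - xs) = enorm' ((Qᵀ * (1 - G * A) ^ j * Q) *ᵥ w₀) := by rw [h1, h2]
    _ ≤ ‖Qᵀ * (1 - G * A) ^ j * Q‖ * enorm' w₀ := enorm_mulVec_le' _ _
    _ = ‖Qᵀ * (1 - G * A) ^ j * Q‖ * enorm' (x₀ - xs) := by rw [← hw₀, enorm_ortho' Q hQortho]

/-- Convergence of iterative refinement: if range(A) ∩ ker(A) = {0} and range(G) = range(A),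
and Q has orthonormal columns spanning range(A), then for every b, x₀ ∈ range(A) the
iteration xⱼ = (I − G A)x_{j−1} + G b stays in range(A), admits an LS solution x* ∈ range(A)
with A x* = b and ‖xⱼ − x*‖ ≤ ‖Qᵀ(I − G A)ʲ Q‖ ‖x₀ − x*‖; moreover convergence for all such
b, x₀ holds if and only if Qᵀ(I − G A)ʲ Q → 0. -/
theorem stmt18 {n r : ℕ} (A G : Matrix (Fin n) (Fin n) ℝ) (Q : Matrix (Fin n) (Fin r) ℝ)
    (hinter : LinearMap.range A.mulVecLin ⊓ LinearMap.ker A.mulVecLin = ⊥)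
    (hrange : LinearMap.range G.mulVecLin = LinearMap.range A.mulVecLin)
    (hQortho : Qᵀ * Q = 1)
    (hQrange : LinearMap.range Q.mulVecLin = LinearMap.range A.mulVecLin) :
    (∀ b ∈ LinearMap.range A.mulVecLin, ∀ x₀ ∈ LinearMap.range A.mulVecLin,
      ∀ x : ℕ → Fin n → ℝ, x 0 = x₀ →
        (∀ j : ℕ, x (j + 1) = (1 - G * A).mulVec (x j) + G.mulVec b) →
        ∃ xs ∈ LinearMap.range A.mulVecLin, A.mulVec xs = b ∧
          (∀ j : ℕ, x j ∈ LinearMap.range A.mulVecLin) ∧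
          ∀ j : ℕ, enorm' (x j - xs) ≤ ‖Qᵀ * (1 - G * A) ^ j * Q‖ * enorm' (x₀ - xs)) ∧
    ((∀ b ∈ LinearMap.range A.mulVecLin, ∀ x₀ ∈ LinearMap.range A.mulVecLin,
      ∀ x : ℕ → Fin n → ℝ, x 0 = x₀ →
        (∀ j : ℕ, x (j + 1) = (1 - G * A).mulVec (x j) + G.mulVec b) →
        ∃ xs ∈ LinearMap.range A.mulVecLin, A.mulVec xs = b ∧
          Filter.Tendsto x Filter.atTop (nhds xs)) ↔
      Filter.Tendsto (fun j : ℕ => Qᵀ * (1 - G * A) ^ j * Q) Filter.atTop (nhds 0)) := by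
  refine ⟨fun b hb x₀ hx₀ x h0 hrec =>
    key' A G Q hinter hrange hQortho hQrange b hb x₀ hx₀ x h0 hrec, ?_, ?_⟩
  · -- forward: convergence for all data implies matrix tendsto 0
    intro hconv
    have hvec : ∀ w : Fin r → ℝ,
        Filter.Tendsto (fun j => ((1 - G * A) ^ j) *ᵥ (Q *ᵥ w)) Filter.atTop (nhds 0) := by
      intro w
      have hx₀ : Q *ᵥ w ∈ LinearMap.range A.mulVecLin := by
        rw [← hQrange]; exact ⟨w, rfl⟩
      obtain ⟨xs, hxsV, hAxs, hten⟩ := hconv 0 (zero_mem _) (Q *ᵥ w) hx₀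
        (fun j => ((1 - G * A) ^ j) *ᵥ (Q *ᵥ w))
        (show ((1 - G * A) ^ 0) *ᵥ (Q *ᵥ w) = Q *ᵥ w by rw [pow_zero, Matrix.one_mulVec])
        (fun j => show ((1 - G * A) ^ (j + 1)) *ᵥ (Q *ᵥ w)
            = (1 - G * A) *ᵥ (((1 - G * A) ^ j) *ᵥ (Q *ᵥ w)) + G *ᵥ 0 by
          rw [Matrix.mulVec_zero, add_zero, pow_succ', ← Matrix.mulVec_mulVec])
      have hxs0 : xs = 0 := by
        have hker : xs ∈ LinearMap.ker A.mulVecLin := by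
          rw [LinearMap.mem_ker, Matrix.mulVecLin_apply, hAxs]
        have : xs ∈ LinearMap.range A.mulVecLin ⊓ LinearMap.ker A.mulVecLin :=
          Submodule.mem_inf.mpr ⟨hxsV, hker⟩
        rw [hinter] at this
        exact (Submodule.mem_bot ℝ).mp this
      rwa [hxs0] at hten
    set Mf : ℕ → Matrix (Fin r) (Fin r) ℝ := fun j => Qᵀ * (1 - G * A) ^ j * Q with hMf
    have hent : ∀ (i : Fin r) (k : Fin r),
        Filter.Tendsto (fun j => Mf j i k) Filter.atTop (nhds 0) := by
      intro i k
      have h1 := hvec (Pi.single k 1)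
      have h2 : Filter.Tendsto
          (fun j => (Qᵀ *ᵥ (((1 - G * A) ^ j) *ᵥ (Q *ᵥ Pi.single k 1))) i)
          Filter.atTop (nhds 0) := by
        have hsum : ∀ j, (Qᵀ *ᵥ (((1 - G * A) ^ j) *ᵥ (Q *ᵥ Pi.single k 1))) i
            = ∑ s, Qᵀ i s * (((1 - G * A) ^ j) *ᵥ (Q *ᵥ Pi.single k 1)) s := fun j => rfl
        simp only [hsum]
        have : Filter.Tendsto
            (fun j => ∑ s, Qᵀ i s * (((1 - G * A) ^ j) *ᵥ (Q *ᵥ Pi.single k 1)) s)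
            Filter.atTop (nhds (∑ s : Fin n, Qᵀ i s * 0)) := by
          refine tendsto_finset_sum _ fun s _ => Filter.Tendsto.const_mul _ ?_
          exact (tendsto_pi_nhds.mp h1 s)
        simpa using this
      have heq : ∀ j, Mf j i k
          = (Qᵀ *ᵥ (((1 - G * A) ^ j) *ᵥ (Q *ᵥ Pi.single k 1))) i := by
        intro j
        rw [Matrix.mulVec_mulVec, Matrix.mulVec_mulVec, Matrix.mulVec_single]
        simp [hMf]
      simpa only [heq] using h2
    -- from entrywise convergence to norm convergence via the Frobenius bound
    have hfrob : Filter.Tendsto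
        (fun j => Real.sqrt (∑ i, ∑ k, Mf j i k ^ 2))
        Filter.atTop (nhds 0) := by
      have hsum : Filter.Tendsto
          (fun j => ∑ i, ∑ k, Mf j i k ^ 2)
          Filter.atTop (nhds 0) := by
        have : Filter.Tendsto
            (fun j => ∑ i, ∑ k, Mf j i k ^ 2)
            Filter.atTop (nhds (∑ i : Fin r, ∑ k : Fin r, (0 : ℝ))) := by
          refine tendsto_finset_sum _ fun i _ => tendsto_finset_sum _ fun k _ => ?_
          simpa [pow_two] using ((hent i k).mul (hent i k))
        simpa using this
      have hc : Filter.Tendsto Real.sqrt (nhds 0) (nhds 0) := by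
        simpa using (Real.continuous_sqrt.tendsto 0)
      exact hc.comp hsum
    exact squeeze_zero_norm (fun j => opNorm_le_frob' (Mf j)) hfrob
  · -- backward: matrix tendsto 0 implies convergence
    intro hM b hb x₀ hx₀ x h0 hrec
    obtain ⟨xs, hxsV, hAxs, _, hbound⟩ :=
      key' A G Q hinter hrange hQortho hQrange b hb x₀ hx₀ x h0 hrec
    refine ⟨xs, hxsV, hAxs, ?_⟩
    have hnorm : Filter.Tendsto (fun j => ‖Qᵀ * (1 - G * A) ^ j * Q‖ * enorm' (x₀ - xs))
        Filter.atTop (nhds 0) := by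
      have := (hM.norm).mul_const (enorm' (x₀ - xs))
      simpa using this
    rw [tendsto_pi_nhds]
    intro i
    have hcoord : Filter.Tendsto (fun j => x j i - xs i) Filter.atTop (nhds 0) := by
      refine squeeze_zero_norm (fun j => ?_) hnorm
      calc ‖x j i - xs i‖ = |(x j - xs) i| := rfl
        _ ≤ enorm' (x j - xs) := abs_le_enorm' _ i
        _ ≤ ‖Qᵀ * (1 - G * A) ^ j * Q‖ * enorm' (x₀ - xs) := hbound j
    have := hcoord.add_const (xs i)
    simpa using this
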